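/- For every ν > 0 and every c > 0, the map r ↦ ν·r + H*(c·r) is a strictly increasing continuous bijection from ℝ onto ℝ; in particular the operator z ↦ ν·z + H*((σ²/2)·z) is pointwise invertible when |σ(x)| ≥ ρ > 0. -/

import Mathlib

open Set Filter

/-- The Legendre conjugate of `H = h + indicator of [0,∞)`:
`H*(p) = sup { p·u − h(u) : u ∈ [0,∞) }`. -/
noncomputable def Hstar (h : ℝ → ℝ) (p : ℝ) : ℝ :=
  sSup ((fun u => p * u - h u) '' Set.Ici (0 : ℝ))

lemma Hstar_bddAbove (h : ℝ → ℝ) (α₁ α₂ : ℝ) (hα₁ : 0 < α₁)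
    (hlb : ∀ u : ℝ, α₁ * u ^ 2 + α₂ ≤ h u) (p : ℝ) :
    BddAbove ((fun u => p * u - h u) '' Set.Ici (0 : ℝ)) := by
  refine ⟨p ^ 2 / (4 * α₁) - α₂, ?_⟩
  rintro _ ⟨u, hu, rfl⟩
  have hh := hlb u
  have h4 : (0:ℝ) < 4 * α₁ := by linarith
  have key0 : p * u - α₁ * u ^ 2 ≤ p ^ 2 / (4 * α₁) := by
    rw [le_div_iff₀ h4]
    nlinarith [sq_nonneg (p - 2 * α₁ * u)]
  simp only
  linarith

lemma Hstar_nonempty (h : ℝ → ℝ) (p : ℝ) :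
    ((fun u => p * u - h u) '' Set.Ici (0 : ℝ)).Nonempty :=
  ⟨p * 0 - h 0, 0, Set.mem_Ici.mpr le_rfl, rfl⟩

lemma Hstar_mono (h : ℝ → ℝ) (α₁ α₂ : ℝ) (hα₁ : 0 < α₁)
    (hlb : ∀ u : ℝ, α₁ * u ^ 2 + α₂ ≤ h u) :
    Monotone (Hstar h) := by
  intro p q hpq
  refine csSup_le (Hstar_nonempty h p) ?_
  rintro _ ⟨u, hu, rfl⟩
  refine le_trans ?_ (le_csSup (Hstar_bddAbove h α₁ α₂ hα₁ hlb q) ⟨u, hu, rfl⟩)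
  have hle : p * u ≤ q * u := mul_le_mul_of_nonneg_right hpq hu
  simp only
  linarith

lemma Hstar_lower (h : ℝ → ℝ) (α₁ α₂ : ℝ) (hα₁ : 0 < α₁)
    (hlb : ∀ u : ℝ, α₁ * u ^ 2 + α₂ ≤ h u) (p : ℝ) :
    -h 0 ≤ Hstar h p := by
  have := le_csSup (Hstar_bddAbove h α₁ α₂ hα₁ hlb p) (⟨0, Set.mem_Ici.mpr le_rfl, rfl⟩ :
    p * 0 - h 0 ∈ (fun u => p * u - h u) '' Set.Ici (0 : ℝ))
  simpa [Hstar] using this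

lemma Hstar_convex (h : ℝ → ℝ) (α₁ α₂ : ℝ) (hα₁ : 0 < α₁)
    (hlb : ∀ u : ℝ, α₁ * u ^ 2 + α₂ ≤ h u) :
    ConvexOn ℝ Set.univ (Hstar h) := by
  refine ⟨convex_univ, fun p _ q _ a b ha hb hab => ?_⟩
  refine csSup_le (Hstar_nonempty h _) ?_
  rintro _ ⟨u, hu, rfl⟩
  have hp : p * u - h u ≤ Hstar h p :=
    le_csSup (Hstar_bddAbove h α₁ α₂ hα₁ hlb p) ⟨u, hu, rfl⟩
  have hq : q * u - h u ≤ Hstar h q :=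
    le_csSup (Hstar_bddAbove h α₁ α₂ hα₁ hlb q) ⟨u, hu, rfl⟩
  have h1 := mul_le_mul_of_nonneg_left hp ha
  have h2 := mul_le_mul_of_nonneg_left hq hb
  simp only [smul_eq_mul]
  have key : (a * p + b * q) * u - h u = a * (p * u - h u) + b * (q * u - h u) := by
    linear_combination (h u) * hab
  rw [key]
  linarith

theorem nu_id_add_hstar_bijective
    (h : ℝ → ℝ) (hconv : ConvexOn ℝ Set.univ h) (hcont : Continuous h)
    (α₁ α₂ : ℝ) (hα₁ : 0 < α₁) (hα₂ : 0 ≤ α₂)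
    (hlb : ∀ u : ℝ, α₁ * u ^ 2 + α₂ ≤ h u) :
    (∀ ν > (0 : ℝ), ∀ c > (0 : ℝ),
      StrictMono (fun r : ℝ => ν * r + Hstar h (c * r)) ∧
      Continuous (fun r : ℝ => ν * r + Hstar h (c * r)) ∧
      Function.Bijective (fun r : ℝ => ν * r + Hstar h (c * r))) ∧
    (∀ ν > (0 : ℝ), ∀ (σ : ℝ → ℝ) (ρ : ℝ), 0 < ρ → (∀ x : ℝ, ρ ≤ |σ x|) →
      ∀ x : ℝ, Function.Bijective (fun z : ℝ => ν * z + Hstar h (σ x ^ 2 / 2 * z))) := by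
  have Hmono := Hstar_mono h α₁ α₂ hα₁ hlb
  have Hcont : Continuous (Hstar h) := by
    have := (Hstar_convex h α₁ α₂ hα₁ hlb).continuousOn isOpen_univ
    exact continuousOn_univ.mp this
  have main : ∀ ν > (0 : ℝ), ∀ c > (0 : ℝ),
      StrictMono (fun r : ℝ => ν * r + Hstar h (c * r)) ∧
      Continuous (fun r : ℝ => ν * r + Hstar h (c * r)) ∧
      Function.Bijective (fun r : ℝ => ν * r + Hstar h (c * r)) := by
    intro ν hν c hc
    have hsm : StrictMono (fun r : ℝ => ν * r + Hstar h (c * r)) := by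
      intro r s hrs
      have h1 : ν * r < ν * s := by nlinarith
      have h2 : Hstar h (c * r) ≤ Hstar h (c * s) := Hmono (by nlinarith)
      simp only
      linarith
    have hctn : Continuous (fun r : ℝ => ν * r + Hstar h (c * r)) :=
      (continuous_const.mul continuous_id).add
        (Hcont.comp (continuous_const.mul continuous_id))
    refine ⟨hsm, hctn, hsm.injective, ?_⟩
    have glow : Tendsto (fun r : ℝ => ν * r + (-h 0)) atTop atTop :=
      tendsto_atTop_add_const_right _ _ (tendsto_id.const_mul_atTop hν)
    have htop : Tendsto (fun r : ℝ => ν * r + Hstar h (c * r)) atTop atTop := by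
      refine tendsto_atTop_mono (fun r => ?_) glow
      exact add_le_add le_rfl (Hstar_lower h α₁ α₂ hα₁ hlb _)
    have gup : Tendsto (fun r : ℝ => ν * r + Hstar h 0) atBot atBot :=
      tendsto_atBot_add_const_right _ _ (tendsto_id.const_mul_atBot hν)
    have hbot : Tendsto (fun r : ℝ => ν * r + Hstar h (c * r)) atBot atBot := by
      refine tendsto_atBot_mono' _ ?_ gup
      filter_upwards [eventually_le_atBot (0 : ℝ)] with r hr
      exact add_le_add le_rfl (Hmono (by nlinarith))
    exact hctn.surjective htop hbot
  refine ⟨main, fun ν hν σ ρ hρ hσ x => ?_⟩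
  have h1 : ρ ≤ |σ x| := hσ x
  have habs : (0:ℝ) < |σ x| := lt_of_lt_of_le hρ h1
  have hne : σ x ≠ 0 := fun h0 => by simp [h0] at habs
  have hpos : (0:ℝ) < σ x ^ 2 / 2 := by positivity
  exact (main ν hν _ hpos).2.2
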